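/- If X has the beta(1,θ) distribution on [0,1] with θ > 0, then the stick-breaking decrement matrix q(n:m) = C(n,m) E[X^m (1-X)^{n-m}] / E[1 - (1-X)^n] equals C(n,m) [θ]_{n-m} m! / ([θ+1]_{n-1} n), where [θ]_k = θ(θ+1)⋯(θ+k-1) is the rising factorial. -/

import Mathlib

/-- The rising factorial `[x]_k = x(x+1)⋯(x+k-1)`. -/
noncomputable def risingFac (x : ℝ) (k : ℕ) : ℝ := ∏ i ∈ Finset.range k, (x + i)

open Finset MeasureTheory

lemma Jc (c : ℝ) (hc : -1 < c) : ∫ x in Set.Ioo (0:ℝ) 1, x ^ c = 1/(c+1) := by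
  rw [← MeasureTheory.integral_Ioc_eq_integral_Ioo,
    ← intervalIntegral.integral_of_le zero_le_one, integral_rpow (Or.inl hc)]
  rw [Real.one_rpow, Real.zero_rpow (by linarith)]
  ring

lemma J1c (c : ℝ) (hc : -1 < c) : ∫ x in Set.Ioo (0:ℝ) 1, (1-x) ^ c = 1/(c+1) := by
  rw [← MeasureTheory.integral_Ioc_eq_integral_Ioo,
    ← intervalIntegral.integral_of_le zero_le_one]
  have := intervalIntegral.integral_comp_sub_left (a := 0) (b := 1) (fun x => x ^ c) 1
  simp only [sub_self, sub_zero] at this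
  rw [this, integral_rpow (Or.inl hc), Real.one_rpow, Real.zero_rpow (by linarith)]
  ring

lemma J1int (c : ℝ) (hc : -1 < c) :
    MeasureTheory.IntegrableOn (fun x => (1-x) ^ c) (Set.Ioo (0:ℝ) 1) := by
  have h := ((intervalIntegral.intervalIntegrable_rpow' hc (a := 0) (b := 1)).comp_sub_left 1).symm
  simp only [sub_self, sub_zero] at h
  rw [intervalIntegrable_iff_integrableOn_Ioc_of_le zero_le_one] at h
  exact h.mono_set Set.Ioo_subset_Ioc_self

lemma numInt (θ : ℝ) (hθ : 0 < θ) (a m : ℕ) :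
    (∫ x in Set.Ioo (0 : ℝ) 1, x ^ m * (1 - x) ^ a * (θ * (1 - x) ^ (θ - 1)))
      = ∑ k ∈ range (m+1), ((-1:ℝ)^k * (m.choose k) * θ) * (1/(θ + (a + k : ℕ))) := by
  have hcongr : ∀ x ∈ Set.Ioo (0:ℝ) 1,
      x ^ m * (1 - x) ^ a * (θ * (1 - x) ^ (θ - 1))
      = ∑ k ∈ range (m+1), ((-1:ℝ)^k * (m.choose k) * θ) * (1-x) ^ (θ - 1 + (a + k : ℕ)) := by
    intro x hx
    have hu : 0 < 1 - x := by simp at hx; linarith [hx.2]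
    have e1 : x ^ m = ∑ k ∈ range (m+1), (-1:ℝ)^k * (1-x)^k * (m.choose k) := by
      conv_lhs => rw [show x = -(1-x)+1 by ring]
      rw [add_pow]
      apply Finset.sum_congr rfl
      intro k _
      rw [one_pow, neg_pow]
      ring
    rw [e1, Finset.sum_mul, Finset.sum_mul]
    apply Finset.sum_congr rfl
    intro k _
    have e2 : (1-x) ^ (θ - 1 + (a + k : ℕ)) = (1-x)^(θ-1) * (1-x)^(k) * (1-x)^(a) := by
      rw [Real.rpow_add hu, Real.rpow_natCast, pow_add]
      ring
    rw [e2]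
    ring
  rw [MeasureTheory.setIntegral_congr_fun measurableSet_Ioo hcongr]
  rw [MeasureTheory.integral_finset_sum]
  · apply Finset.sum_congr rfl
    intro k _
    rw [MeasureTheory.integral_const_mul, J1c _ (by have h : (0:ℝ) ≤ ((a+k:ℕ):ℝ) := Nat.cast_nonneg _; linarith)]
    congr 1
    push_cast
    ring
  · intro k _
    exact (J1int _ (by have h : (0:ℝ) ≤ ((a+k:ℕ):ℝ) := Nat.cast_nonneg _; linarith)).const_mul _

lemma sumId : ∀ (m : ℕ) (y : ℝ), 0 < y →
    ∑ k ∈ range (m+1), (-1:ℝ)^k * (m.choose k) / (y + k)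
      = (m.factorial : ℝ) / ∏ i ∈ range (m+1), (y + i) := by
  intro m
  induction m with
  | zero => intro y hy; simp
  | succ m ih =>
    intro y hy
    have hy' : y ≠ 0 := ne_of_gt hy
    have hy1 : (0:ℝ) < y + 1 := by linarith
    have hP : (0:ℝ) < ∏ i ∈ range (m+1), (y + i) := by
      apply Finset.prod_pos; intro i _; positivity
    have hQ : (0:ℝ) < ∏ i ∈ range (m+1), (y + 1 + i) := by
      apply Finset.prod_pos; intro i _; positivity
    set P := ∏ i ∈ range (m+1), (y + (i:ℝ)) with hPdef
    set Q := ∏ i ∈ range (m+1), (y + 1 + (i:ℝ)) with hQdef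
    have hR : ∏ i ∈ range (m+2), (y + (i:ℝ)) = P * (y + ((m:ℝ)+1)) := by
      rw [Finset.prod_range_succ, ← hPdef]; push_cast; ring
    have hR2 : y * Q = P * (y + ((m:ℝ)+1)) := by
      rw [← hR, Finset.prod_range_succ' (fun i => (y + (i:ℝ)))]
      simp only [Nat.cast_zero, add_zero]
      rw [mul_comm]
      congr 1
      apply Finset.prod_congr rfl
      intro i _; push_cast; ring
    rw [Finset.sum_range_succ' (fun k => (-1:ℝ)^k * (((m+1).choose k):ℝ) / (y + k)) (m+1)]
    have hterm : ∀ k ∈ range (m+1),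
        (-1:ℝ)^(k+1) * (((m+1).choose (k+1)):ℝ) / (y + ((k+1:ℕ):ℝ))
        = (-((-1:ℝ)^k * (m.choose k) / ((y+1) + k)))
          + (-1:ℝ)^(k+1) * ((m.choose (k+1)):ℝ) / (y + ((k+1:ℕ):ℝ)) := by
      intro k _
      have h1 : y + ((k:ℝ)+1) ≠ 0 := by positivity
      have h2 : y + 1 + (k:ℝ) ≠ 0 := by positivity
      rw [Nat.choose_succ_succ]
      push_cast
      field_simp
      ring
    rw [Finset.sum_congr rfl hterm, Finset.sum_add_distrib, Finset.sum_neg_distrib,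
      ih (y+1) hy1]
    have hg : ∑ k ∈ range (m+1), (-1:ℝ)^(k+1) * ((m.choose (k+1)):ℝ) / (y + ((k+1:ℕ):ℝ))
        = (m.factorial : ℝ)/P - 1/y := by
      have h := ih y hy
      rw [Finset.sum_range_succ' (fun k => (-1:ℝ)^k * ((m.choose k):ℝ) / (y + k))] at h
      simp only [pow_zero, Nat.choose_zero_right, Nat.cast_one, one_mul, Nat.cast_zero,
        add_zero, ← hPdef] at h
      rw [Finset.sum_range_succ]
      simp only [Nat.choose_succ_self, Nat.cast_zero, mul_zero, zero_div, add_zero]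
      push_cast at h ⊢
      linarith [h]
    rw [hg]
    simp only [pow_zero, Nat.choose_zero_right, Nat.cast_one, one_mul, Nat.cast_zero, add_zero]
    rw [hR, Nat.factorial_succ]
    have key : (m.factorial:ℝ)/P - (m.factorial:ℝ)/Q
        = ((m:ℝ)+1)*(m.factorial:ℝ)/(P*(y+((m:ℝ)+1))) := by
      rw [div_sub_div _ _ hP.ne' hQ.ne', div_eq_div_iff (by positivity) (by positivity)]
      linear_combination ((m.factorial:ℝ) * P) * hR2
    push_cast
    linarith [key]

lemma denInt (θ : ℝ) (hθ : 0 < θ) (n : ℕ) :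
    (∫ x in Set.Ioo (0 : ℝ) 1, (1 - (1 - x) ^ n) * (θ * (1 - x) ^ (θ - 1)))
      = (n : ℝ) / (θ + n) := by
  have hcongr : ∀ x ∈ Set.Ioo (0:ℝ) 1,
      (1 - (1 - x) ^ n) * (θ * (1 - x) ^ (θ - 1))
      = θ * (1-x) ^ (θ-1) - θ * (1-x) ^ (θ - 1 + (n:ℕ)) := by
    intro x hx
    have hu : 0 < 1 - x := by simp at hx; linarith [hx.2]
    have e2 : (1-x) ^ (θ - 1 + (n:ℕ)) = (1-x)^(θ-1) * (1-x)^(n) := by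
      rw [Real.rpow_add hu, Real.rpow_natCast]
    rw [e2]; ring
  rw [MeasureTheory.setIntegral_congr_fun measurableSet_Ioo hcongr,
    MeasureTheory.integral_sub ((J1int _ (by linarith)).const_mul θ)
      ((J1int _ (by have h : (0:ℝ) ≤ ((n:ℕ):ℝ) := Nat.cast_nonneg _; linarith)).const_mul θ),
    MeasureTheory.integral_const_mul, MeasureTheory.integral_const_mul,
    J1c _ (by linarith), J1c _ (by have h : (0:ℝ) ≤ ((n:ℕ):ℝ) := Nat.cast_nonneg _; linarith)]
  have h1 : θ - 1 + 1 = θ := by ring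
  have h2 : θ - 1 + (n:ℝ) + 1 = θ + n := by ring
  rw [h1, h2]
  have hn : (0:ℝ) < θ + n := by positivity
  field_simp
  ring

/-- If `X ~ beta(1,θ)`, with density `θ(1-x)^{θ-1}` on `(0,1)`, the stick-breaking decrement
matrix equals `C(n,m) [θ]_{n-m} m! / ([θ+1]_{n-1} n)`. -/
theorem stmt7 (θ : ℝ) (hθ : 0 < θ) (n m : ℕ) (h1 : 1 ≤ m) (h2 : m ≤ n) :
    (n.choose m : ℝ) *
        (∫ x in Set.Ioo (0 : ℝ) 1, x ^ m * (1 - x) ^ (n - m) * (θ * (1 - x) ^ (θ - 1)))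
      / (∫ x in Set.Ioo (0 : ℝ) 1, (1 - (1 - x) ^ n) * (θ * (1 - x) ^ (θ - 1)))
    = (n.choose m : ℝ) * (risingFac θ (n - m) * (m.factorial : ℝ))
      / (risingFac (θ + 1) (n - 1) * n) := by
  unfold risingFac
  have hn1 : 1 ≤ n := le_trans h1 h2
  have hy : (0:ℝ) < θ + ((n-m : ℕ):ℝ) := by positivity
  have hnum : (∫ x in Set.Ioo (0 : ℝ) 1, x ^ m * (1 - x) ^ (n - m) * (θ * (1 - x) ^ (θ - 1)))
      = θ * (m.factorial : ℝ) / ∏ i ∈ range (m+1), (θ + ((n-m:ℕ):ℝ) + i) := by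
    rw [numInt θ hθ (n-m) m]
    have : ∑ k ∈ range (m+1), ((-1:ℝ)^k * (m.choose k) * θ) * (1/(θ + ((n-m) + k : ℕ)))
        = θ * ∑ k ∈ range (m+1), (-1:ℝ)^k * (m.choose k) / ((θ + ((n-m:ℕ):ℝ)) + k) := by
      rw [Finset.mul_sum]
      apply Finset.sum_congr rfl
      intro k _
      push_cast
      ring
    rw [this, sumId m _ hy, mul_div_assoc]
  rw [hnum, denInt θ hθ n]
  set P := ∏ i ∈ range (m+1), (θ + ((n-m:ℕ):ℝ) + i) with hPdef
  set R1 := ∏ i ∈ Finset.range (n-m), (θ + (i:ℝ)) with hR1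
  set R2 := ∏ i ∈ Finset.range (n-1), (θ + 1 + (i:ℝ)) with hR2
  have hPpos : (0:ℝ) < P := Finset.prod_pos (fun i _ => by positivity)
  have hR1pos : (0:ℝ) < R1 := Finset.prod_pos (fun i _ => by positivity)
  have hR2pos : (0:ℝ) < R2 := Finset.prod_pos (fun i _ => by positivity)
  have hnpos : (0:ℝ) < (n:ℝ) := by exact_mod_cast hn1
  have hθn : (0:ℝ) < θ + n := by positivity
  -- key product identity
  have key : R1 * P = θ * (R2 * (θ + n)) := by
    have hsplit : (n-m) + (m+1) = n+1 := by omega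
    have e1 : ∏ i ∈ range (n+1), (θ + (i:ℝ)) = R1 * P := by
      rw [← hsplit, Finset.prod_range_add]
      congr 1
      apply Finset.prod_congr rfl
      intro i _; push_cast; ring
    have e2 : ∏ i ∈ range (n+1), (θ + (i:ℝ)) = θ * ∏ i ∈ range n, (θ + 1 + (i:ℝ)) := by
      rw [Finset.prod_range_succ' (fun i => (θ + (i:ℝ)))]
      simp only [Nat.cast_zero, add_zero]
      rw [mul_comm]
      congr 1
      apply Finset.prod_congr rfl
      intro i _; push_cast; ring
    have e3 : ∏ i ∈ range n, (θ + 1 + (i:ℝ)) = R2 * (θ + n) := by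
      conv_lhs => rw [show n = (n-1)+1 by omega]
      rw [Finset.prod_range_succ, ← hR2]
      congr 1
      have : ((n-1:ℕ):ℝ) = (n:ℝ) - 1 := by
        rw [Nat.cast_sub hn1]; simp
      rw [this]; ring
    rw [← e1, e2, e3]
  rw [div_eq_div_iff (by positivity) (by positivity)]
  field_simp
  linear_combination (-(n.choose m : ℝ)) * key
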